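/- Let n ≥ 4 and 1 ≤ p < ⌊n/2⌋. Suppose there exists a homeomorphism f ∈ W^{1,p}((-1,1)ⁿ, ℝⁿ) with J_f > 0 on a set of positive measure and J_f < 0 on a set of positive measure. Then there is no sequence of maps f_k : (-1,1)ⁿ → ℝⁿ, each locally Lipschitz with Jacobian of constant a.e. sign (J_{f_k} ≥ 0 a.e. or J_{f_k} ≤ 0 a.e.), such that f_k → f in W^{1,p}_loc((-1,1)ⁿ, ℝⁿ). -/

import Mathlib

open Set MeasureTheory Filter Metric

/-- The Jacobian determinant of a map `g : ℝⁿ → ℝⁿ` at `x`. -/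
noncomputable def jacobian {n : ℕ} (g : (Fin n → ℝ) → (Fin n → ℝ)) (x : Fin n → ℝ) : ℝ :=
  LinearMap.det ((fderiv ℝ g x) : (Fin n → ℝ) →ₗ[ℝ] (Fin n → ℝ))

/-- a `W^{1,p}` homeomorphism of `(-1,1)ⁿ` whose Jacobian changes sign on
sets of positive measure cannot be approximated in `W^{1,p}_loc` by locally Lipschitz
maps with Jacobians of constant a.e. sign. -/
theorem stmt_10 (n : ℕ) (hn : 4 ≤ n) (p : ℝ) (hp1 : 1 ≤ p) (hp2 : p < (n / 2 : ℕ))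
    (Q : Set (Fin n → ℝ)) (hQ : Q = Set.pi univ fun _ : Fin n => Ioo (-1 : ℝ) 1)
    (f : (Fin n → ℝ) → (Fin n → ℝ))
    -- f is a homeomorphism of Q onto its image
    (hfc : ContinuousOn f Q) (hfinj : InjOn f Q)
    -- f belongs to W^{1,p}(Q, ℝⁿ)
    (hfLp : eLpNorm f (ENNReal.ofReal p) (volume.restrict Q) < ⊤)
    (hDfLp : eLpNorm (fun x => fderiv ℝ f x) (ENNReal.ofReal p) (volume.restrict Q) < ⊤)
    -- the Jacobian changes sign on sets of positive measure
    (hpos : 0 < volume {x ∈ Q | 0 < jacobian f x})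
    (hneg : 0 < volume {x ∈ Q | jacobian f x < 0}) :
    ¬ ∃ fk : ℕ → (Fin n → ℝ) → (Fin n → ℝ),
      -- each fk is locally Lipschitz on Q
      (∀ k, ∀ x ∈ Q, ∃ ε > 0, ∃ K : NNReal, LipschitzOnWith K (fk k) (ball x ε ∩ Q)) ∧
      -- each fk has a Jacobian of constant a.e. sign
      (∀ k, (∀ᵐ x ∂(volume.restrict Q), 0 ≤ jacobian (fk k) x) ∨
            (∀ᵐ x ∂(volume.restrict Q), jacobian (fk k) x ≤ 0)) ∧
      -- fk → f in W^{1,p}_loc(Q, ℝⁿ)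
      (∀ K : Set (Fin n → ℝ), K ⊆ Q → IsCompact K →
        Tendsto (fun k => eLpNorm (fun x => fk k x - f x) (ENNReal.ofReal p)
          (volume.restrict K)) atTop (nhds 0) ∧
        Tendsto (fun k => eLpNorm (fun x => fderiv ℝ (fk k) x - fderiv ℝ f x)
          (ENNReal.ofReal p) (volume.restrict K)) atTop (nhds 0)) := by
  rintro ⟨fk, -, hsign, hconv⟩
  -- a compact exhaustion of the cube
  set Km : ℕ → Set (Fin n → ℝ) :=
    fun m => Set.pi univ fun _ => Icc (-(1 - 1 / ((m : ℝ) + 1))) (1 - 1 / ((m : ℝ) + 1))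
    with hKm
  have hinv : ∀ m : ℕ, 0 < 1 / ((m : ℝ) + 1) := fun m => by positivity
  have hKmQ : ∀ m, Km m ⊆ Q := by
    intro m x hx
    rw [hQ]
    intro i _
    have hxi := hx i (mem_univ i)
    have := hinv m
    exact ⟨by simp only [mem_Icc] at hxi; nlinarith [hxi.1], by
      simp only [mem_Icc] at hxi; nlinarith [hxi.2]⟩
  have hKmcompact : ∀ m, IsCompact (Km m) := fun m => isCompact_univ_pi fun _ => isCompact_Icc
  have hKmono : Monotone Km := by
    intro a b hab x hx i _
    have hxi := hx i (mem_univ i)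
    simp only [mem_Icc] at hxi ⊢
    have h1 : 1 / ((b : ℝ) + 1) ≤ 1 / ((a : ℝ) + 1) := by
      apply one_div_le_one_div_of_le (by positivity)
      have : (a : ℝ) ≤ b := Nat.cast_le.2 hab
      linarith
    constructor <;> nlinarith [hxi.1, hxi.2]
  have hQsub : Q ⊆ ⋃ m, Km m := by
    intro x hx
    rw [hQ] at hx
    haveI : Nonempty (Fin n) := ⟨⟨0, by omega⟩⟩
    set t := Finset.univ.sup' Finset.univ_nonempty (fun i => |x i|) with ht
    have ht1 : t < 1 := by
      rw [ht, Finset.sup'_lt_iff]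
      intro i _
      have := hx i (mem_univ i)
      exact abs_lt.2 ⟨this.1, this.2⟩
    obtain ⟨m, hm⟩ := exists_nat_one_div_lt (by linarith : (0 : ℝ) < 1 - t)
    refine mem_iUnion.2 ⟨m, fun i _ => ?_⟩
    have hle : |x i| ≤ t := Finset.le_sup' (fun i => |x i|) (Finset.mem_univ i)
    have : |x i| ≤ 1 - 1 / ((m : ℝ) + 1) := by linarith
    rw [abs_le] at this
    exact ⟨this.1, this.2⟩
  -- both sign sets meet some compact cube in positive measure
  have hex : ∀ S : Set (Fin n → ℝ), S ⊆ Q → 0 < volume S → ∃ m, 0 < volume (S ∩ Km m) := by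
    intro S hSQ hS
    by_contra h
    push_neg at h
    have h0 : ∀ m, volume (S ∩ Km m) = 0 := fun m => le_antisymm (h m) zero_le
    have hsub : S ⊆ ⋃ m, S ∩ Km m := by
      intro x hx
      obtain ⟨m, hm⟩ := mem_iUnion.1 (hQsub (hSQ hx))
      exact mem_iUnion.2 ⟨m, hx, hm⟩
    exact absurd (measure_mono_null hsub (measure_iUnion_null h0)) hS.ne'
  obtain ⟨m1, h1⟩ := hex _ (sep_subset _ _) hpos
  obtain ⟨m2, h2⟩ := hex _ (sep_subset _ _) hneg
  set K := Km (max m1 m2) with hK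
  have hKQ : K ⊆ Q := hKmQ _
  have h1' : 0 < volume ({x ∈ Q | 0 < jacobian f x} ∩ K) :=
    h1.trans_le (measure_mono (inter_subset_inter_right _ (hKmono (le_max_left _ _))))
  have h2' : 0 < volume ({x ∈ Q | jacobian f x < 0} ∩ K) :=
    h2.trans_le (measure_mono (inter_subset_inter_right _ (hKmono (le_max_right _ _))))
  obtain ⟨-, hder⟩ := hconv K hKQ (hKmcompact _)
  -- a subsequence whose derivatives converge a.e. on K
  have hm : TendstoInMeasure (volume.restrict K) (fun k x => fderiv ℝ (fk k) x) atTop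
      (fun x => fderiv ℝ f x) := by
    refine tendstoInMeasure_of_tendsto_eLpNorm (p := ENNReal.ofReal p)
      (by simp [ENNReal.ofReal_eq_zero]; linarith)
      (fun k => (measurable_fderiv ℝ (fk k)).aestronglyMeasurable)
      ((measurable_fderiv ℝ f).aestronglyMeasurable) ?_
    exact hder
  obtain ⟨ns, hnsmono, hae⟩ := hm.exists_seq_tendsto_ae
  have haejac : ∀ᵐ x ∂(volume.restrict K),
      Tendsto (fun i => jacobian (fk (ns i)) x) atTop (nhds (jacobian f x)) :=
    hae.mono fun x hx => (ContinuousLinearMap.continuous_det.tendsto _).comp hx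
  have hKmeas : MeasurableSet K := (hKmcompact _).measurableSet
  by_cases hfreq : ∃ᶠ i in atTop, ∀ᵐ x ∂(volume.restrict Q), 0 ≤ jacobian (fk (ns i)) x
  · obtain ⟨φ, hφmono, hφ⟩ := extraction_of_frequently_atTop hfreq
    have hall : ∀ᵐ x ∂(volume.restrict K), ∀ i, 0 ≤ jacobian (fk (ns (φ i))) x := by
      rw [ae_all_iff]
      exact fun i => ae_mono (Measure.restrict_mono hKQ le_rfl) (hφ i)
    have hnn : ∀ᵐ x ∂(volume.restrict K), 0 ≤ jacobian f x := by
      filter_upwards [haejac, hall] with x hx h0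
      exact ge_of_tendsto' (hx.comp (hφmono.tendsto_atTop)) h0
    have hzero : volume ({x | jacobian f x < 0} ∩ K) = 0 := by
      have := hnn
      rw [ae_iff] at this
      rw [Measure.restrict_apply' hKmeas] at this
      simpa [not_le] using this
    have : volume ({x ∈ Q | jacobian f x < 0} ∩ K) = 0 :=
      measure_mono_null (inter_subset_inter_left _ (fun y hy => hy.2)) hzero
    exact absurd this h2'.ne'
  · have hev : ∀ᶠ i in atTop, ∀ᵐ x ∂(volume.restrict Q), jacobian (fk (ns i)) x ≤ 0 := by
      rw [not_frequently] at hfreq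
      filter_upwards [hfreq] with i hi
      exact (hsign (ns i)).resolve_left hi
    obtain ⟨φ, hφmono, hφ⟩ := extraction_of_frequently_atTop hev.frequently
    have hall : ∀ᵐ x ∂(volume.restrict K), ∀ i, jacobian (fk (ns (φ i))) x ≤ 0 := by
      rw [ae_all_iff]
      exact fun i => ae_mono (Measure.restrict_mono hKQ le_rfl) (hφ i)
    have hnp : ∀ᵐ x ∂(volume.restrict K), jacobian f x ≤ 0 := by
      filter_upwards [haejac, hall] with x hx h0
      exact le_of_tendsto' (hx.comp (hφmono.tendsto_atTop)) h0
    have hzero : volume ({x | 0 < jacobian f x} ∩ K) = 0 := by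
      have := hnp
      rw [ae_iff] at this
      rw [Measure.restrict_apply' hKmeas] at this
      simpa [not_le] using this
    have : volume ({x ∈ Q | 0 < jacobian f x} ∩ K) = 0 :=
      measure_mono_null (inter_subset_inter_left _ (fun y hy => hy.2)) hzero
    exact absurd this h1'.ne'
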